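/- arXiv:1803.04516 — 3 statements merged into one kernel-verified Lean document; each statement's English description precedes it below -/
import Mathlib

section
/- Let n ≥ 2, b ∈ {1, −1}, c ≥ 0 with c ≠ 2, and d be real with λ = c − d ≠ 0, and suppose Q is invertible. Then for all 1 ≤ i ≤ j ≤ n, the complex number coercion of (Q^{-1})_{ij} equals (b^{i−1} κ_{i−1} / κ_0) · (b^{j−1} κ_{n−j} / κ), where κ = φ_+² r_+^{n−1} − φ_-² r_-^{n−1} (which in particular is nonzero). -/
/-- The sequence β₀ = 1, β₁ = d, βᵢ = c βᵢ₋₁ − βᵢ₋₂. -/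
noncomputable def beta (c d : ℝ) : ℕ → ℝ
  | 0 => 1
  | 1 => d
  | i + 2 => c * beta c d (i + 1) - beta c d i

/-- The n×n symmetric tridiagonal matrix with diagonal (d, c, …, c, d) and
off-diagonal entries −b. -/
noncomputable def triQ (n : ℕ) (b c d : ℝ) : Matrix (Fin n) (Fin n) ℝ :=
  Matrix.of fun i j =>
    if i = j then (if (i : ℕ) = 0 ∨ (i : ℕ) = n - 1 then d else c)
    else if (i : ℕ) + 1 = (j : ℕ) ∨ (j : ℕ) + 1 = (i : ℕ) then -b else 0

lemma beta_zero (c d : ℝ) : beta c d 0 = 1 := rfl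
lemma beta_one (c d : ℝ) : beta c d 1 = d := rfl
lemma beta_rec (c d : ℝ) (k : ℕ) : beta c d (k+2) = c * beta c d (k+1) - beta c d k := rfl

lemma beta_cross (c d : ℝ) : ∀ k l : ℕ, beta c d (k+1) * beta c d (l+1) - beta c d k * beta c d l
    = d * beta c d (k+l+1) - beta c d (k+l) := by
  intro k
  induction k with
  | zero => intro l; simp [beta_one, beta_zero]
  | succ k ih =>
    intro l
    calc beta c d (k+1+1) * beta c d (l+1) - beta c d (k+1) * beta c d l
        = beta c d (k+1) * beta c d (l+1+1) - beta c d k * beta c d (l+1) := by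
          rw [beta_rec c d k, beta_rec c d l]; ring
      _ = d * beta c d (k+(l+1)+1) - beta c d (k+(l+1)) := ih (l+1)
      _ = d * beta c d (k+1+l+1) - beta c d (k+1+l) := by
          rw [show k+(l+1)+1 = k+1+l+1 from by omega, show k+(l+1) = k+1+l from by omega]

lemma sum_if_coe {n : ℕ} (m : ℕ) (f : Fin n → ℝ) :
    ∑ l : Fin n, (if m = (l:ℕ) then f l else 0) = if h : m < n then f ⟨m, h⟩ else 0 := by
  split
  · next h =>
    rw [Finset.sum_eq_single (⟨m, h⟩ : Fin n)]
    · simp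
    · intro l _ hl
      rw [if_neg]
      intro e; exact hl (Fin.ext e.symm)
    · simp
  · next h =>
    apply Finset.sum_eq_zero
    intro l _
    rw [if_neg]
    have := l.isLt
    omega

lemma sum_if_pred {n : ℕ} (m : ℕ) (f : Fin n → ℝ) :
    ∑ l : Fin n, (if (l:ℕ) + 1 = m then f l else 0)
    = if h : m - 1 < n ∧ 1 ≤ m then f ⟨m-1, h.1⟩ else 0 := by
  rcases Nat.eq_zero_or_pos m with hm | hm
  · subst hm; simp
  · calc ∑ l : Fin n, (if (l:ℕ) + 1 = m then f l else 0)
        = ∑ l : Fin n, (if m - 1 = (l:ℕ) then f l else 0) :=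
          Finset.sum_congr rfl fun l _ => if_congr (by omega) rfl rfl
      _ = _ := by
          rw [sum_if_coe]
          by_cases h : m - 1 < n
          · rw [dif_pos h, dif_pos ⟨h, hm⟩]
          · rw [dif_neg h, dif_neg (fun hh => h hh.1)]

lemma triQ_split (n : ℕ) (b c d : ℝ) (k l : Fin n) :
    triQ n b c d k l =
      (if l = k then (if (k : ℕ) = 0 ∨ (k : ℕ) = n - 1 then d else c) else 0)
      + (if (k:ℕ) + 1 = (l:ℕ) then -b else 0)
      + (if (l:ℕ) + 1 = (k:ℕ) then -b else 0) := by
  by_cases h : k = l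
  · subst h
    simp only [triQ, Matrix.of_apply, if_pos rfl, if_neg (show ¬(k:ℕ)+1 = (k:ℕ) by omega)]
    simp
  · have hkl : (k:ℕ) ≠ (l:ℕ) := fun e => h (Fin.ext e)
    rw [triQ, Matrix.of_apply, if_neg h, if_neg (fun e : l = k => h e.symm)]
    by_cases h1 : (k:ℕ) + 1 = (l:ℕ)
    · rw [if_pos (Or.inl h1), if_pos h1, if_neg (by omega)]; ring
    · by_cases h2 : (l:ℕ) + 1 = (k:ℕ)
      · rw [if_pos (Or.inr h2), if_neg h1, if_pos h2]; ring
      · rw [if_neg (by tauto), if_neg h1, if_neg h2]; ring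

lemma triQ_mul (n : ℕ) (hn : 2 ≤ n) (b c d : ℝ) (hb2 : b^2 = 1) :
    triQ n b c d * Matrix.of (fun i j : Fin n =>
        b^((i:ℕ)+(j:ℕ)) * beta c d (min (i:ℕ) (j:ℕ)) * beta c d (n - 1 - max (i:ℕ) (j:ℕ)))
    = (d * beta c d (n-1) - beta c d (n-2)) • (1 : Matrix (Fin n) (Fin n) ℝ) := by
  obtain ⟨m, rfl⟩ : ∃ m, n = m + 2 := ⟨n - 2, by omega⟩
  ext k j
  rw [Matrix.mul_apply, Matrix.smul_apply, Matrix.one_apply, smul_eq_mul]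
  simp only [Matrix.of_apply]
  have key : ∑ l : Fin (m+2), triQ (m+2) b c d k l *
        (b^((l:ℕ)+(j:ℕ)) * beta c d (min (l:ℕ) (j:ℕ)) * beta c d ((m+2) - 1 - max (l:ℕ) (j:ℕ)))
      = (if (k:ℕ) = 0 ∨ (k:ℕ) = (m+2)-1 then d else c) *
          (b^((k:ℕ)+(j:ℕ)) * beta c d (min (k:ℕ) (j:ℕ)) * beta c d ((m+2) - 1 - max (k:ℕ) (j:ℕ)))
        + (if h : (k:ℕ)+1 < (m+2) then
            -b * (b^(((k:ℕ)+1)+(j:ℕ)) * beta c d (min ((k:ℕ)+1) (j:ℕ)) * beta c d ((m+2) - 1 - max ((k:ℕ)+1) (j:ℕ))) else 0)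
        + (if h : (k:ℕ)-1 < (m+2) ∧ 1 ≤ (k:ℕ) then
            -b * (b^(((k:ℕ)-1)+(j:ℕ)) * beta c d (min ((k:ℕ)-1) (j:ℕ)) * beta c d ((m+2) - 1 - max ((k:ℕ)-1) (j:ℕ))) else 0) := by
    have step1 : ∑ l : Fin (m+2), triQ (m+2) b c d k l *
          (b^((l:ℕ)+(j:ℕ)) * beta c d (min (l:ℕ) (j:ℕ)) * beta c d ((m+2) - 1 - max (l:ℕ) (j:ℕ)))
        = ∑ l : Fin (m+2),
          ((if l = k then (if (k:ℕ) = 0 ∨ (k:ℕ) = (m+2)-1 then d else c) *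
              (b^((l:ℕ)+(j:ℕ)) * beta c d (min (l:ℕ) (j:ℕ)) * beta c d ((m+2) - 1 - max (l:ℕ) (j:ℕ))) else 0)
          + ((if (k:ℕ)+1 = (l:ℕ) then
              -b * (b^((l:ℕ)+(j:ℕ)) * beta c d (min (l:ℕ) (j:ℕ)) * beta c d ((m+2) - 1 - max (l:ℕ) (j:ℕ))) else 0)
          + (if (l:ℕ)+1 = (k:ℕ) then
              -b * (b^((l:ℕ)+(j:ℕ)) * beta c d (min (l:ℕ) (j:ℕ)) * beta c d ((m+2) - 1 - max (l:ℕ) (j:ℕ))) else 0))) := by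
      refine Finset.sum_congr rfl fun l _ => ?_
      rw [triQ_split]
      split_ifs with h1 h2 h3 <;> ring
    rw [step1, Finset.sum_add_distrib, Finset.sum_add_distrib,
        Finset.sum_ite_eq' Finset.univ k, sum_if_coe, sum_if_pred]
    simp
    ring
  rw [key]
  have hK := k.isLt
  have hJ := j.isLt
  by_cases hk0 : (k:ℕ) = 0
  · rw [if_pos (Or.inl hk0), dif_pos (show (k:ℕ)+1 < (m+2) by omega), dif_neg (by omega)]
    by_cases hj0 : (j:ℕ) = 0
    · rw [if_pos (show k = j from Fin.ext (by omega))]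
      simp only [hk0, hj0]
      norm_num
      simp only [beta_zero]
      linear_combination (-(beta c d m)) * hb2
    · rw [if_neg (show ¬ k = j from fun e => by rw [e] at hk0; exact hj0 hk0)]
      simp only [hk0]
      rw [min_eq_left (show 0 ≤ (j:ℕ) by omega), max_eq_right (show 0 ≤ (j:ℕ) by omega),
          min_eq_left (show 0+1 ≤ (j:ℕ) by omega), max_eq_right (show 0+1 ≤ (j:ℕ) by omega)]
      simp only [beta_zero, beta_one]
      norm_num
      simp only [beta_zero, beta_one]
      linear_combination (-(d * b^((j:ℕ)) * beta c d (m+1-(j:ℕ)))) * hb2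
  · by_cases hkn : (k:ℕ) = (m+2) - 1
    · rw [if_pos (Or.inr hkn), dif_neg (by omega), dif_pos (show (k:ℕ)-1 < (m+2) ∧ 1 ≤ (k:ℕ) by omega)]
      have hkn' : (k:ℕ) = m+1 := by omega
      by_cases hjn : (j:ℕ) = m+1
      · rw [if_pos (show k = j from Fin.ext (by omega))]
        simp only [hkn', hjn]
        norm_num
        simp only [beta_zero]
        have hp : (b^2)^(m+1) = 1 := by rw [hb2, one_pow]
        linear_combination (d * beta c d (m+1) - beta c d m) * hp
      · rw [if_neg (show ¬ k = j from fun e => by rw [e] at hkn'; exact hjn hkn')]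
        simp only [hkn']
        norm_num
        rw [min_eq_right (show (j:ℕ) ≤ m by omega), max_eq_left (show (j:ℕ) ≤ m by omega),
            show m + 1 - m = 1 from by omega]
        simp only [min_eq_right (show (j:ℕ) ≤ 1+m from by omega),
          min_eq_right (show (j:ℕ) ≤ m+1 from by omega), beta_zero, beta_one]
        ring
    · rw [if_neg (by omega), dif_pos (show (k:ℕ)+1 < (m+2) by omega),
          dif_pos (show (k:ℕ)-1 < (m+2) ∧ 1 ≤ (k:ℕ) by omega)]
      obtain ⟨a, ha⟩ : ∃ a, (k:ℕ) = a + 1 := ⟨(k:ℕ)-1, by omega⟩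
      obtain ⟨t, rfl⟩ : ∃ t, m = a + 1 + t := ⟨m - a - 1, by omega⟩
      simp only [ha]
      norm_num
      rcases lt_trichotomy (j:ℕ) (a+1) with hj | hj | hj
      · rw [if_neg (show ¬ k = j from fun e => by rw [e] at ha; omega)]
        rw [min_eq_right (show (j:ℕ) ≤ a+1 by omega), max_eq_left (show (j:ℕ) ≤ a+1 by omega),
            min_eq_right (show (j:ℕ) ≤ a+1+1 by omega), max_eq_left (show (j:ℕ) ≤ a+1+1 by omega),
            min_eq_right (show (j:ℕ) ≤ a by omega), max_eq_left (show (j:ℕ) ≤ a by omega)]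
        rw [show a+1+t+1-(a+1) = t+1 from by omega, show a+1+t+1-(a+1+1) = t from by omega,
            show a+1+t+1-a = t+2 from by omega, beta_rec c d t]
        linear_combination (-(beta c d (j:ℕ) * beta c d t * b^(a+1+(j:ℕ)))) * hb2
      · rw [if_pos (show k = j from Fin.ext (by omega))]
        simp only [hj]
        rw [min_self, max_self,
            min_eq_right (show a+1 ≤ a+1+1 by omega), max_eq_left (show a+1 ≤ a+1+1 by omega),
            min_eq_left (show a ≤ a+1 by omega), max_eq_right (show a ≤ a+1 by omega)]
        rw [show a+1+t+1-(a+1) = t+1 from by omega, show a+1+t+1-(a+1+1) = t from by omega]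
        have hp1 : (b^2)^(a+1) = 1 := by rw [hb2, one_pow]
        have hp2 : (b^2)^(a+2) = 1 := by rw [hb2, one_pow]
        have hcross := beta_cross c d (a+1) t
        have hrec := beta_rec c d a
        linear_combination (c * beta c d (a+1) * beta c d (t+1) - beta c d a * beta c d (t+1)) * hp1
          - beta c d (a+1) * beta c d t * hp2 + hcross - beta c d (t+1) * hrec
      · rw [if_neg (show ¬ k = j from fun e => by rw [e] at ha; omega)]
        rw [min_eq_left (show a+1 ≤ (j:ℕ) by omega), max_eq_right (show a+1 ≤ (j:ℕ) by omega),
            min_eq_left (show a+1+1 ≤ (j:ℕ) by omega), max_eq_right (show a+1+1 ≤ (j:ℕ) by omega),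
            min_eq_left (show a ≤ (j:ℕ) by omega), max_eq_right (show a ≤ (j:ℕ) by omega)]
        have hrec := beta_rec c d a
        linear_combination (-(b^(a+3+(j:ℕ)) * beta c d (a+1+t+1-(j:ℕ)))) * hrec
          + (-(beta c d (a+1+t+1-(j:ℕ)) * (c * beta c d (a+1) - beta c d a) * b^(a+1+(j:ℕ)))) * hb2

lemma kappa_beta (c d : ℝ) (s rp rm : ℂ) (hsum : rp + rm = (c:ℂ)) (hmul : rp * rm = 1)
    (hdiff : rp - rm = s) :
    ∀ i : ℕ, (rp - ((c:ℂ) - (d:ℂ))) * rp ^ i - (rm - ((c:ℂ) - (d:ℂ))) * rm ^ i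
      = s * ((beta c d i : ℝ) : ℂ) := by
  have hrp2 : rp^2 = (c:ℂ) * rp - 1 := by linear_combination rp * hsum - hmul
  have hrm2 : rm^2 = (c:ℂ) * rm - 1 := by linear_combination rm * hsum - hmul
  intro i
  induction i using Nat.twoStepInduction with
  | zero =>
    rw [beta_zero]
    push_cast
    linear_combination hdiff
  | one =>
    rw [beta_one]
    linear_combination hrp2 - hrm2 + (d:ℂ) * hdiff
  | more i ih1 ih2 =>
    have hbr : ((beta c d (i+2) : ℝ) : ℂ) = (c:ℂ) * ((beta c d (i+1) : ℝ) : ℂ) - ((beta c d i : ℝ) : ℂ) := by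
      exact_mod_cast congrArg (fun x : ℝ => (x:ℂ)) (beta_rec c d i)
    linear_combination (c:ℂ) * ih2 - ih1
      + (rp - ((c:ℂ)-(d:ℂ))) * rp^i * hrp2 - (rm - ((c:ℂ)-(d:ℂ))) * rm^i * hrm2 - s * hbr

lemma kap_beta (c d : ℝ) (m : ℕ) (s rp rm : ℂ) (hsum : rp + rm = (c:ℂ)) (hmul : rp * rm = 1)
    (hdiff : rp - rm = s) :
    (rp - ((c:ℂ) - (d:ℂ)))^2 * rp^(m+1) - (rm - ((c:ℂ) - (d:ℂ)))^2 * rm^(m+1)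
      = s * ((d * beta c d (m+1) - beta c d m : ℝ) : ℂ) := by
  have h2 := kappa_beta c d s rp rm hsum hmul hdiff (m+2)
  have h1 := kappa_beta c d s rp rm hsum hmul hdiff (m+1)
  have hbr : ((beta c d (m+2) : ℝ) : ℂ) = (c:ℂ) * ((beta c d (m+1) : ℝ) : ℂ) - ((beta c d m : ℝ) : ℂ) := by
    exact_mod_cast congrArg (fun x : ℝ => (x:ℂ)) (beta_rec c d m)
  push_cast
  push_cast at h1 h2 hbr
  linear_combination h2 - ((c:ℂ) - (d:ℂ)) * h1 + s * hbr

/-- Corollary, c ≠ 2: if Q is invertible then, in ℂ,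
(Q⁻¹)ᵢⱼ = (b^{i−1} κ_{i−1}/κ₀)(b^{j−1} κ_{n−j}/κ) for 1 ≤ i ≤ j ≤ n, where
κ = φ₊² r₊^{n−1} − φ₋² r₋^{n−1} ≠ 0. -/
theorem triQ_inv_c_ne_two (n : ℕ) (hn : 2 ≤ n) (b c d : ℝ) (hb : b = 1 ∨ b = -1)
    (hc0 : 0 ≤ c) (hc : c ≠ 2) (hlam : c - d ≠ 0)
    (hQ : IsUnit (triQ n b c d)) :
    let lam : ℂ := (c : ℂ) - (d : ℂ)
    let rp : ℂ := ((c : ℂ) + ((c : ℂ) ^ 2 - 4) ^ ((1 : ℂ) / 2)) / 2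
    let rm : ℂ := ((c : ℂ) - ((c : ℂ) ^ 2 - 4) ^ ((1 : ℂ) / 2)) / 2
    let kappa : ℕ → ℂ := fun i => (rp - lam) * rp ^ i - (rm - lam) * rm ^ i
    let kap : ℂ := (rp - lam) ^ 2 * rp ^ (n - 1) - (rm - lam) ^ 2 * rm ^ (n - 1)
    kap ≠ 0 ∧
    ∀ i j : Fin n, i ≤ j →
      ((triQ n b c d)⁻¹ i j : ℂ) =
        ((b : ℂ) ^ (i : ℕ) * kappa (i : ℕ) / kappa 0) *
          ((b : ℂ) ^ (j : ℕ) * kappa (n - 1 - (j : ℕ)) / kap) := by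
  obtain ⟨m, rfl⟩ : ∃ m, n = m + 2 := ⟨n - 2, by omega⟩
  have hb2 : b ^ 2 = 1 := by rcases hb with rfl | rfl <;> norm_num
  have hbne : b ≠ 0 := by rcases hb with rfl | rfl <;> norm_num
  -- complex preliminaries
  set s : ℂ := ((c : ℂ) ^ 2 - 4) ^ ((1 : ℂ) / 2) with hsdef
  set rp : ℂ := ((c : ℂ) + s) / 2 with hrpdef
  set rm : ℂ := ((c : ℂ) - s) / 2 with hrmdef
  have hc4 : (c : ℂ) ^ 2 - 4 ≠ 0 := by
    intro h
    have h' : (c : ℝ) ^ 2 = 4 := by exact_mod_cast (by linear_combination h : ((c:ℂ))^2 = 4)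
    have : c = 2 := by nlinarith
    exact hc this
  have hs2 : s ^ 2 = (c : ℂ) ^ 2 - 4 := by
    rw [sq, hsdef, ← Complex.cpow_add _ _ hc4]
    norm_num
  have hs0 : s ≠ 0 := by
    intro h
    exact hc4 ((Complex.cpow_eq_zero_iff _ _).1 (hsdef ▸ h)).1
  have hsum : rp + rm = (c : ℂ) := by rw [hrpdef, hrmdef]; ring
  have hdiff : rp - rm = s := by rw [hrpdef, hrmdef]; ring
  have hmul : rp * rm = 1 := by
    rw [hrpdef, hrmdef]
    linear_combination (-(1:ℂ)/4) * hs2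
  have kb := kappa_beta c d s rp rm hsum hmul hdiff
  -- real matrix part
  set D : ℝ := d * beta c d (m + 2 - 1) - beta c d (m + 2 - 2) with hDdef
  set Mmat : Matrix (Fin (m+2)) (Fin (m+2)) ℝ := Matrix.of (fun i j : Fin (m+2) =>
      b ^ ((i:ℕ)+(j:ℕ)) * beta c d (min (i:ℕ) (j:ℕ)) * beta c d ((m+2) - 1 - max (i:ℕ) (j:ℕ)))
    with hMdef
  have hQM : triQ (m+2) b c d * Mmat = D • 1 := triQ_mul (m+2) (by omega) b c d hb2
  have hdet : IsUnit (triQ (m+2) b c d).det := (Matrix.isUnit_iff_isUnit_det _).1 hQ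
  have hD : D ≠ 0 := by
    intro h0
    have h1 : triQ (m+2) b c d * Mmat = 0 := by rw [hQM, h0, zero_smul]
    have h2 : Mmat = 0 := by
      calc Mmat = ((triQ (m+2) b c d)⁻¹ * triQ (m+2) b c d) * Mmat := by
            rw [Matrix.nonsing_inv_mul _ hdet, one_mul]
        _ = (triQ (m+2) b c d)⁻¹ * (triQ (m+2) b c d * Mmat) := by rw [Matrix.mul_assoc]
        _ = 0 := by rw [h1, Matrix.mul_zero]
    have h3 : Mmat ⟨0, by omega⟩ ⟨m+1, by omega⟩ = 0 := by rw [h2]; rfl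
    rw [hMdef, Matrix.of_apply] at h3
    simp only at h3
    rw [show min 0 (m+1) = 0 from by omega, show max 0 (m+1) = m+1 from by omega,
        show m+2-1-(m+1) = 0 from by omega, beta_zero] at h3
    simp [hbne] at h3
  have hDc : ((D:ℝ):ℂ) ≠ 0 := by exact_mod_cast hD
  have hinv : (triQ (m+2) b c d)⁻¹ = D⁻¹ • Mmat := by
    apply Matrix.inv_eq_right_inv
    rw [Matrix.mul_smul, hQM, smul_smul, inv_mul_cancel₀ hD, one_smul]
  have hkapD : (rp - ((c:ℂ) - (d:ℂ)))^2 * rp^(m+2-1) - (rm - ((c:ℂ) - (d:ℂ)))^2 * rm^(m+2-1)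
      = s * ((D:ℝ):ℂ) := kap_beta c d m s rp rm hsum hmul hdiff
  have h1 : (rp - ((c:ℂ) - (d:ℂ)))^2 * rp^(m+2-1) - (rm - ((c:ℂ) - (d:ℂ)))^2 * rm^(m+2-1) ≠ 0 := by
    rw [hkapD]; exact mul_ne_zero hs0 hDc
  have h2 : ∀ i j : Fin (m+2), i ≤ j →
      (((triQ (m+2) b c d)⁻¹ i j : ℝ) : ℂ) =
        ((b : ℂ) ^ (i : ℕ) * ((rp - ((c:ℂ)-(d:ℂ))) * rp ^ (i:ℕ) - (rm - ((c:ℂ)-(d:ℂ))) * rm ^ (i:ℕ))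
            / ((rp - ((c:ℂ)-(d:ℂ))) * rp ^ (0:ℕ) - (rm - ((c:ℂ)-(d:ℂ))) * rm ^ (0:ℕ))) *
          ((b : ℂ) ^ (j : ℕ) * ((rp - ((c:ℂ)-(d:ℂ))) * rp ^ (m+2-1-(j:ℕ)) - (rm - ((c:ℂ)-(d:ℂ))) * rm ^ (m+2-1-(j:ℕ)))
            / ((rp - ((c:ℂ)-(d:ℂ)))^2 * rp^(m+2-1) - (rm - ((c:ℂ)-(d:ℂ)))^2 * rm^(m+2-1))) := by
    intro i j hij
    have hij' : (i:ℕ) ≤ (j:ℕ) := hij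
    rw [hinv, Matrix.smul_apply, hMdef, Matrix.of_apply]
    simp only [smul_eq_mul]
    rw [min_eq_left hij', max_eq_right hij']
    rw [kb (i:ℕ), kb 0, kb (m+2-1-(j:ℕ)), hkapD]
    rw [beta_zero]
    push_cast
    field_simp
    ring
  exact ⟨h1, h2⟩
end

section
/- Let n ≥ 2, b = 1, and let c > 2 and d > 1 be real with λ = c − d ≠ 0, and let Q be the corresponding n×n tridiagonal matrix. Then Q is invertible, the sequence u_i = β_{i−1} (i = 1, …, n) is positive and strictly increasing, the sequence v_i = β_{n−i} / (d β_{n−1} − β_{n−2}) (i = 1, …, n) is positive and strictly decreasing, and every entry of Q^{-1} is positive. -/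
lemma beta_step (c d : ℝ) (i : ℕ) :
    beta c d (i + 2) = c * beta c d (i + 1) - beta c d i := by simp [beta]

section

variable {c d : ℝ} (hc : 2 < c) (hd : 1 < d)

include hc hd in
lemma beta_pos_lt : ∀ i, 0 < beta c d i ∧ beta c d i < beta c d (i + 1) := by
  intro i
  induction i with
  | zero => constructor <;> simp [beta] <;> linarith
  | succ k ih =>
    obtain ⟨h1, h2⟩ := ih
    refine ⟨by linarith, ?_⟩
    rw [beta_step]
    nlinarith

include hc hd in
lemma beta_pos (i : ℕ) : 0 < beta c d i := (beta_pos_lt hc hd i).1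

include hc hd in
lemma beta_mono : StrictMono (beta c d) :=
  strictMono_nat_of_lt_succ fun i => (beta_pos_lt hc hd i).2

/-- Wronskian-type function. -/
noncomputable def hW (c d : ℝ) (k l : ℕ) : ℝ :=
  beta c d (k + 1) * beta c d (l + 1) - beta c d k * beta c d l

lemma hW_shift (c d : ℝ) (k l : ℕ) : hW c d k (l + 1) = hW c d (k + 1) l := by
  simp only [hW, beta_step]
  ring

lemma hW_const (c d : ℝ) : ∀ j l, hW c d j l = hW c d 0 (l + j) := by
  intro j
  induction j with
  | zero => simp
  | succ k ih =>
    intro l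
    rw [← hW_shift, ih (l + 1)]
    ring_nf

lemma hW_eq (c d : ℝ) {j m : ℕ} (hj : j ≤ m) :
    hW c d j (m - j) = d * beta c d (m + 1) - beta c d m := by
  rw [hW_const]
  have : m - j + j = m := by omega
  rw [this]
  simp [hW, beta]

end

/-- candidate inverse entries (over ℕ indices), n = m+2. -/
noncomputable def Mf (m : ℕ) (c d : ℝ) (a b : ℕ) : ℝ :=
  beta c d (min a b) * beta c d (m + 1 - max a b) /
    (d * beta c d (m + 1) - beta c d m)

section

variable {m : ℕ} {c d : ℝ} (hc : 2 < c) (hd : 1 < d)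

include hc hd in
lemma D_pos : 0 < d * beta c d (m + 1) - beta c d m := by
  have h1 := beta_pos hc hd (m + 1)
  have h2 := (beta_pos_lt hc hd m).2
  nlinarith

include hc hd in
lemma Mf_pos (a b : ℕ) : 0 < Mf m c d a b :=
  div_pos (mul_pos (beta_pos hc hd _) (beta_pos hc hd _)) (D_pos hc hd)

include hc hd in
lemma row0 (j : ℕ) : d * Mf m c d 0 j - Mf m c d 1 j = if 0 = j then 1 else 0 := by
  have hD := (D_pos (m := m) hc hd).ne'
  rcases Nat.eq_zero_or_pos j with hj | hj
  · subst hj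
    simp only [Mf]
    norm_num [beta]
    rw [mul_div_assoc', div_sub_div_same, div_self hD]
  · rw [if_neg (by omega)]
    have h1 : min 0 j = 0 := by simp only [min_def]; split <;> omega
    have h2 : max 0 j = j := by simp only [max_def]; split <;> omega
    have h3 : min 1 j = 1 := by simp only [min_def]; split <;> omega
    have h4 : max 1 j = j := by simp only [max_def]; split <;> omega
    simp only [Mf, h1, h2, h3, h4]
    simp [beta]
    ring

include hc hd in
lemma rowlast (j : ℕ) (hj : j ≤ m + 1) :
    d * Mf m c d (m + 1) j - Mf m c d m j = if m + 1 = j then 1 else 0 := by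
  have hD := (D_pos (m := m) hc hd).ne'
  rcases eq_or_lt_of_le hj with hj' | hj'
  · subst hj'
    rw [if_pos rfl]
    have h1 : min (m+1) (m+1) = m+1 := min_self _
    have h2 : m + 1 - max (m+1) (m+1) = 0 := by rw [max_self]; omega
    have h3 : min m (m+1) = m := by simp only [min_def]; split <;> omega
    have h4 : m + 1 - max m (m+1) = 0 := by
      rw [max_eq_right (by omega : m ≤ m + 1)]; omega
    simp only [Mf, h1, h2, h3, h4]
    show d * (beta c d (m+1) * beta c d 0 / _) - beta c d m * beta c d 0 / _ = 1
    show d * (beta c d (m+1) * 1 / _) - beta c d m * 1 / _ = 1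
    rw [mul_one, mul_one, mul_div_assoc', div_sub_div_same, div_self hD]
  · rw [if_neg (by omega)]
    have h1 : min (m+1) j = j := min_eq_right (by omega)
    have h2 : m + 1 - max (m+1) j = 0 := by
      rw [max_eq_left (by omega : j ≤ m + 1)]; omega
    have h3 : min m j = j := min_eq_right (by omega)
    have h4 : m + 1 - max m j = 1 := by
      rw [max_eq_left (by omega : j ≤ m)]; omega
    simp only [Mf, h1, h2, h3, h4]
    show d * (beta c d j * beta c d 0 / _) - beta c d j * beta c d 1 / _ = 0
    show d * (beta c d j * 1 / _) - beta c d j * d / _ = 0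
    ring

include hc hd in
lemma rowmid (i j : ℕ) (hi1 : 1 ≤ i) (hi2 : i ≤ m) :
    -Mf m c d (i - 1) j + c * Mf m c d i j - Mf m c d (i + 1) j
      = if i = j then 1 else 0 := by
  have hD := (D_pos (m := m) hc hd).ne'
  rcases lt_trichotomy j i with hj | hj | hj
  · -- j < i
    rw [if_neg (by omega)]
    have h1 : min (i-1) j = j := min_eq_right (by omega)
    have h2 : m + 1 - max (i-1) j = (m - i) + 2 := by
      rw [max_eq_left (by omega : j ≤ i - 1)]; omega
    have h3 : min i j = j := min_eq_right (by omega)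
    have h4 : m + 1 - max i j = (m - i) + 1 := by
      rw [max_eq_left (by omega : j ≤ i)]; omega
    have h5 : min (i+1) j = j := min_eq_right (by omega)
    have h6 : m + 1 - max (i+1) j = m - i := by
      rw [max_eq_left (by omega : j ≤ i + 1)]; omega
    simp only [Mf, h1, h2, h3, h4, h5, h6, beta_step]
    ring
  · -- j = i
    subst hj
    rw [if_pos rfl]
    have h1 : min (j-1) j = j - 1 := min_eq_left (by omega)
    have h2 : m + 1 - max (j-1) j = m + 1 - j := by
      rw [max_eq_right (by omega : j - 1 ≤ j)]
    have h3 : min j j = j := min_self _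
    have h4 : m + 1 - max j j = m + 1 - j := by rw [max_self]
    have h5 : min (j+1) j = j := min_eq_right (by omega)
    have h6 : m + 1 - max (j+1) j = m - j := by
      rw [max_eq_left (by omega : j ≤ j + 1)]; omega
    have hw := hW_eq c d (show j ≤ m from hi2)
    have hb : beta c d (j + 1) = c * beta c d j - beta c d (j - 1) := by
      have hh : j - 1 + 1 = j := by omega
      have hh2 : j + 1 = (j - 1) + 2 := by omega
      rw [hh2, beta_step, hh]
    have h7 : m - j + 1 = m + 1 - j := by omega
    rw [hW, h7, hb] at hw
    simp only [Mf, h1, h2, h3, h4, h5, h6]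
    have expand :
        -(beta c d (j-1) * beta c d (m+1-j) /
            (d * beta c d (m + 1) - beta c d m)) +
          c * (beta c d j * beta c d (m+1-j) /
            (d * beta c d (m + 1) - beta c d m)) -
          beta c d j * beta c d (m-j) /
            (d * beta c d (m + 1) - beta c d m) =
        ((c * beta c d j - beta c d (j-1)) * beta c d (m+1-j) -
          beta c d j * beta c d (m-j)) /
            (d * beta c d (m + 1) - beta c d m) := by
      ring
    rw [expand, hw, div_self hD]
  · -- i < j
    rw [if_neg (by omega)]
    have h1 : min (i-1) j = i - 1 := min_eq_left (by omega)
    have h2 : m + 1 - max (i-1) j = m + 1 - j := by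
      rw [max_eq_right (by omega : i - 1 ≤ j)]
    have h3 : min i j = i := min_eq_left (by omega)
    have h4 : m + 1 - max i j = m + 1 - j := by
      rw [max_eq_right (by omega : i ≤ j)]
    have h5 : min (i+1) j = i + 1 := min_eq_left (by omega)
    have h6 : m + 1 - max (i+1) j = m + 1 - j := by
      rw [max_eq_right (by omega : i + 1 ≤ j)]
    have hb : beta c d (i + 1) = c * beta c d i - beta c d (i - 1) := by
      have hh : i - 1 + 1 = i := by omega
      have hh2 : i + 1 = (i - 1) + 2 := by omega
      rw [hh2, beta_step, hh]
    simp only [Mf, h1, h2, h3, h4, h5, h6, hb]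
    ring

end

lemma triQ_apply (n : ℕ) (b c d : ℝ) (i j : Fin n) :
    triQ n b c d i j =
      if (i : ℕ) = (j : ℕ) then (if (i : ℕ) = 0 ∨ (i : ℕ) = n - 1 then d else c)
      else if (i : ℕ) + 1 = (j : ℕ) ∨ (j : ℕ) + 1 = (i : ℕ) then -b else 0 := by
  simp [triQ, Fin.ext_iff]

lemma triQ_eq_zero (n : ℕ) (b c d : ℝ) (i j : Fin n)
    (h1 : (i : ℕ) ≠ (j : ℕ)) (h2 : (i : ℕ) + 1 ≠ (j : ℕ)) (h3 : (j : ℕ) + 1 ≠ (i : ℕ)) :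
    triQ n b c d i j = 0 := by
  rw [triQ_apply, if_neg h1, if_neg (by tauto)]

/-- Property: for b = 1, c > 2, d > 1, Q is invertible, the
sequence uᵢ = β_{i−1} is positive and strictly increasing, the sequence
vᵢ = β_{n−i}/(d β_{n−1} − β_{n−2}) is positive and strictly decreasing, and all
entries of Q⁻¹ are positive. -/
theorem triQ_inv_entries_pos (n : ℕ) (hn : 2 ≤ n) (c d : ℝ) (hc : 2 < c) (hd : 1 < d)
    (hlam : c - d ≠ 0) :
    IsUnit (triQ n 1 c d) ∧
    (∀ i : Fin n, 0 < beta c d (i : ℕ)) ∧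
    (∀ i j : Fin n, i < j → beta c d (i : ℕ) < beta c d (j : ℕ)) ∧
    (∀ i : Fin n,
      0 < beta c d (n - 1 - (i : ℕ)) / (d * beta c d (n - 1) - beta c d (n - 2))) ∧
    (∀ i j : Fin n, i < j →
      beta c d (n - 1 - (j : ℕ)) / (d * beta c d (n - 1) - beta c d (n - 2)) <
        beta c d (n - 1 - (i : ℕ)) / (d * beta c d (n - 1) - beta c d (n - 2))) ∧
    (∀ i j : Fin n, 0 < (triQ n 1 c d)⁻¹ i j) := by
  obtain ⟨m, rfl⟩ : ∃ m, n = m + 2 := ⟨n - 2, by omega⟩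
  set M : Matrix (Fin (m + 2)) (Fin (m + 2)) ℝ :=
    Matrix.of fun i j => Mf m c d (i : ℕ) (j : ℕ) with hM
  have hQM : triQ (m + 2) 1 c d * M = 1 := by
    ext i j
    rw [Matrix.mul_apply, Matrix.one_apply]
    rcases Nat.lt_or_ge (i : ℕ) 1 with hi | hi
    · -- i = 0
      have hi0 : (i : ℕ) = 0 := by omega
      have ha : (⟨0, by omega⟩ : Fin (m + 2)) ≠ ⟨1, by omega⟩ := by simp [Fin.ext_iff]
      have hsum : ∑ k, triQ (m + 2) 1 c d i k * M k j =
          ∑ k ∈ ({⟨0, by omega⟩, ⟨1, by omega⟩} : Finset (Fin (m + 2))),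
            triQ (m + 2) 1 c d i k * M k j := by
        refine (Finset.sum_subset (Finset.subset_univ _) ?_).symm
        intro x _ hx
        simp only [Finset.mem_insert, Finset.mem_singleton, Fin.ext_iff] at hx
        push_neg at hx
        rw [triQ_eq_zero _ _ _ _ _ _ (by omega) (by omega) (by omega), zero_mul]
      rw [hsum, Finset.sum_pair ha]
      have hq1 : triQ (m + 2) 1 c d i ⟨0, by omega⟩ = d := by
        rw [triQ_apply]; simp [hi0]
      have hq2 : triQ (m + 2) 1 c d i ⟨1, by omega⟩ = -1 := by
        rw [triQ_apply]; simp [hi0]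
      rw [hq1, hq2]
      have hrow := row0 (m := m) hc hd (j : ℕ)
      have hij : (i = j) ↔ (0 = (j : ℕ)) := by rw [Fin.ext_iff, hi0]
      simp only [hM, Matrix.of_apply]
      rw [if_congr hij rfl rfl]
      linarith
    rcases Nat.lt_or_ge (i : ℕ) (m + 1) with hi2 | hi2
    · -- interior
      have hane : (⟨(i : ℕ) - 1, by omega⟩ : Fin (m + 2)) ∉
          ({i, ⟨(i : ℕ) + 1, by omega⟩} : Finset (Fin (m + 2))) := by
        simp only [Finset.mem_insert, Finset.mem_singleton, Fin.ext_iff]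
        push_neg
        omega
      have hbne : i ≠ (⟨(i : ℕ) + 1, by omega⟩ : Fin (m + 2)) := by
        simp [Fin.ext_iff]
      have hsum : ∑ k, triQ (m + 2) 1 c d i k * M k j =
          ∑ k ∈ ({⟨(i : ℕ) - 1, by omega⟩, i, ⟨(i : ℕ) + 1, by omega⟩} :
              Finset (Fin (m + 2))),
            triQ (m + 2) 1 c d i k * M k j := by
        refine (Finset.sum_subset (Finset.subset_univ _) ?_).symm
        intro x _ hx
        simp only [Finset.mem_insert, Finset.mem_singleton, Fin.ext_iff] at hx
        push_neg at hx
        rw [triQ_eq_zero _ _ _ _ _ _ (by omega) (by omega) (by omega), zero_mul]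
      rw [hsum, Finset.sum_insert hane, Finset.sum_pair hbne]
      have hq1 : triQ (m + 2) 1 c d i ⟨(i : ℕ) - 1, by omega⟩ = -1 := by
        rw [triQ_apply]
        rw [if_neg (by simp; omega), if_pos (by simp; omega)]
      have hq2 : triQ (m + 2) 1 c d i i = c := by
        rw [triQ_apply]
        rw [if_pos rfl, if_neg (by omega)]
      have hq3 : triQ (m + 2) 1 c d i ⟨(i : ℕ) + 1, by omega⟩ = -1 := by
        rw [triQ_apply]
        rw [if_neg (by simp), if_pos (by simp)]
      rw [hq1, hq2, hq3]
      have hrow := rowmid (m := m) hc hd (i : ℕ) (j : ℕ) hi (by omega)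
      have hij : (i = j) ↔ ((i : ℕ) = (j : ℕ)) := Fin.ext_iff
      simp only [hM, Matrix.of_apply]
      rw [if_congr hij rfl rfl]
      linarith
    · -- i = m + 1
      have hi0 : (i : ℕ) = m + 1 := by omega
      have ha : (⟨m, by omega⟩ : Fin (m + 2)) ≠ ⟨m + 1, by omega⟩ := by
        simp [Fin.ext_iff]
      have hsum : ∑ k, triQ (m + 2) 1 c d i k * M k j =
          ∑ k ∈ ({⟨m, by omega⟩, ⟨m + 1, by omega⟩} : Finset (Fin (m + 2))),
            triQ (m + 2) 1 c d i k * M k j := by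
        refine (Finset.sum_subset (Finset.subset_univ _) ?_).symm
        intro x _ hx
        simp only [Finset.mem_insert, Finset.mem_singleton, Fin.ext_iff] at hx
        push_neg at hx
        rw [triQ_eq_zero _ _ _ _ _ _ (by omega) (by omega) (by omega), zero_mul]
      rw [hsum, Finset.sum_pair ha]
      have hq1 : triQ (m + 2) 1 c d i ⟨m, by omega⟩ = -1 := by
        rw [triQ_apply]
        rw [if_neg (by simp; omega), if_pos (by simp; omega)]
      have hq2 : triQ (m + 2) 1 c d i ⟨m + 1, by omega⟩ = d := by
        rw [triQ_apply]
        rw [if_pos (by simp [hi0]), if_pos (by simp [hi0])]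
      rw [hq1, hq2]
      have hrow := rowlast (m := m) hc hd (j : ℕ) (by have := j.isLt; omega)
      have hij : (i = j) ↔ (m + 1 = (j : ℕ)) := by rw [Fin.ext_iff, hi0]
      simp only [hM, Matrix.of_apply]
      rw [if_congr hij rfl rfl]
      linarith
  have hMQ : M * triQ (m + 2) 1 c d = 1 := mul_eq_one_comm.mp hQM
  have hUnit : IsUnit (triQ (m + 2) 1 c d) := ⟨⟨_, M, hQM, hMQ⟩, rfl⟩
  have hinv : (triQ (m + 2) 1 c d)⁻¹ = M := Matrix.inv_eq_right_inv hQM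
  refine ⟨hUnit, fun i => beta_pos hc hd _,
    fun i j h => beta_mono hc hd (Fin.lt_def.mp h),
    fun i => div_pos (beta_pos hc hd _) (D_pos hc hd),
    fun i j h => ?_, fun i j => ?_⟩
  · have h1 := Fin.lt_def.mp h
    have h2 := j.isLt
    exact div_lt_div_of_pos_right (beta_mono hc hd (by omega)) (D_pos hc hd)
  · rw [hinv]
    exact Mf_pos hc hd _ _
end

section
/- Let n ≥ 2, b ∈ {1, −1}, c ≥ 0 and d be real with λ = c − d ≠ 0, suppose either c ≠ 2, or c = 2 and b = −1, and suppose the corresponding n×n tridiagonal matrix Q is invertible. Then the sum s_i of the i-th row of Q^{-1} satisfies s_i = [ 1 − (b − λ)(v_i + v_{n−i+1}) ] / (c − 2b) for every i = 1, …, n. -/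
lemma tri_mulVec (n : ℕ) (b c d : ℝ) (x : Fin n → ℝ) (i : Fin n) :
    (triQ n b c d).mulVec x i =
      (if (i:ℕ) = 0 ∨ (i:ℕ) = n - 1 then d else c) * x i
      - (if h : (i:ℕ) + 1 < n then b * x ⟨(i:ℕ)+1, h⟩ else 0)
      - (if h : 0 < (i:ℕ) then b * x ⟨(i:ℕ)-1, lt_trans (by omega) i.isLt⟩ else 0) := by
  rw [Matrix.mulVec, dotProduct]
  have hsplit : ∀ j : Fin n, triQ n b c d i j * x j =
      (if j = i then (if (i:ℕ) = 0 ∨ (i:ℕ) = n - 1 then d else c) * x j else 0)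
      + (if (i:ℕ) + 1 = (j:ℕ) then -b * x j else 0)
      + (if (j:ℕ) + 1 = (i:ℕ) then -b * x j else 0) := by
    intro j
    simp only [triQ, Matrix.of_apply]
    by_cases hv : (i:ℕ) = (j:ℕ)
    · have h1 : i = j := Fin.ext hv
      rw [if_pos h1, if_pos h1.symm, if_neg (show ¬((i:ℕ)+1 = (j:ℕ)) by omega),
        if_neg (show ¬((j:ℕ)+1 = (i:ℕ)) by omega)]
      ring
    · have h1 : ¬ i = j := fun h => hv (by rw [h])
      have h1' : ¬ j = i := fun h => hv (by rw [h])
      rw [if_neg h1, if_neg h1']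
      by_cases h2 : (i:ℕ) + 1 = (j:ℕ)
      · rw [if_pos (Or.inl h2), if_pos h2, if_neg (show ¬((j:ℕ)+1 = (i:ℕ)) by omega)]
        ring
      · by_cases h3 : (j:ℕ) + 1 = (i:ℕ)
        · rw [if_pos (Or.inr h3), if_neg h2, if_pos h3]; ring
        · rw [if_neg (by tauto), if_neg h2, if_neg h3]; ring
  rw [Finset.sum_congr rfl (fun j _ => hsplit j), Finset.sum_add_distrib,
    Finset.sum_add_distrib]
  have s1 : (∑ j : Fin n, if j = i then (if (i:ℕ) = 0 ∨ (i:ℕ) = n - 1 then d else c) * x j else 0)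
      = (if (i:ℕ) = 0 ∨ (i:ℕ) = n - 1 then d else c) * x i := by
    simp
  have s2 : (∑ j : Fin n, if (i:ℕ) + 1 = (j:ℕ) then -b * x j else 0)
      = -(if h : (i:ℕ) + 1 < n then b * x ⟨(i:ℕ)+1, h⟩ else 0) := by
    by_cases h : (i:ℕ) + 1 < n
    · rw [dif_pos h, Finset.sum_eq_single_of_mem (⟨(i:ℕ)+1, h⟩ : Fin n) (Finset.mem_univ _)]
      · rw [if_pos rfl]; ring
      · intro j _ hj
        rw [if_neg (by simp [Fin.ext_iff] at hj ⊢; omega)]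
    · rw [dif_neg h, Finset.sum_eq_zero]
      · ring
      · intro j _
        have := j.isLt
        rw [if_neg (by omega)]
  have s3 : (∑ j : Fin n, if (j:ℕ) + 1 = (i:ℕ) then -b * x j else 0)
      = -(if h : 0 < (i:ℕ) then b * x ⟨(i:ℕ)-1, lt_trans (by omega) i.isLt⟩ else 0) := by
    by_cases h : 0 < (i:ℕ)
    · rw [dif_pos h, Finset.sum_eq_single_of_mem (⟨(i:ℕ)-1, lt_trans (by omega) i.isLt⟩ : Fin n) (Finset.mem_univ _)]
      · rw [if_pos (by simp; omega)]; ring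
      · intro j _ hj
        rw [if_neg (by simp [Fin.ext_iff] at hj ⊢; omega)]
    · rw [dif_neg h, Finset.sum_eq_zero]
      · ring
      · intro j _
        rw [if_neg (by omega)]
  rw [s1, s2, s3]; ring

lemma cancel_inv_mulVec (n : ℕ) (b c d : ℝ) (hQ : IsUnit (triQ n b c d))
    (u : Fin n → ℝ) : (triQ n b c d)⁻¹.mulVec ((triQ n b c d).mulVec u) = u := by
  rw [Matrix.mulVec_mulVec,
    Matrix.nonsing_inv_mul _ ((Matrix.isUnit_iff_isUnit_det _).mp hQ), Matrix.one_mulVec]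

lemma D_ne_zero (n : ℕ) (hn : 2 ≤ n) (b c d : ℝ) (hb : b = 1 ∨ b = -1)
    (hQ : IsUnit (triQ n b c d)) :
    d * beta c d (n - 1) - beta c d (n - 2) ≠ 0 := by
  intro hD
  set u : Fin n → ℝ := fun i => b ^ (i:ℕ) * beta c d (n - 1 - (i:ℕ)) with hu
  have hzero : (triQ n b c d).mulVec u = 0 := by
    funext i
    rw [tri_mulVec]
    simp only [hu, Pi.zero_apply]
    by_cases h0 : (i:ℕ) = 0
    · obtain ⟨m, rfl⟩ : ∃ m, n = m + 2 := ⟨n - 2, by omega⟩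
      rw [dif_pos (by omega), dif_neg (by omega), if_pos (Or.inl h0)]
      simp only [h0]
      norm_num
      have hD' : d * beta c d (m + 1) - beta c d m = 0 := by
        have e1 : m + 2 - 1 = m + 1 := by omega
        have e2 : m + 2 - 2 = m := by omega
        rw [e1, e2] at hD; exact hD
      rcases hb with rfl | rfl <;> simp <;> linarith [hD']
    · by_cases h1 : (i:ℕ) = n - 1
      · obtain ⟨m, rfl⟩ : ∃ m, n = m + 2 := ⟨n - 2, by omega⟩
        have h1' : (i:ℕ) = m + 1 := by omega
        rw [dif_neg (by omega), dif_pos (by omega), if_pos (Or.inr h1)]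
        simp only [h1']
        have e1 : m + 2 - 1 - (m + 1) = 0 := by omega
        have e2 : m + 1 - 1 = m := by omega
        have e3 : m + 2 - 1 - m = 1 := by omega
        rw [e1, e2, e3]
        simp only [beta]
        rcases hb with rfl | rfl <;> simp [pow_succ] <;> ring
      · have hi := i.isLt
        obtain ⟨j, hj⟩ : ∃ j, (i:ℕ) = j + 1 := ⟨(i:ℕ) - 1, by omega⟩
        obtain ⟨k, hk⟩ : ∃ k, n = j + k + 3 := ⟨n - j - 3, by omega⟩
        rw [dif_pos (by omega), dif_pos (by omega), if_neg (by omega)]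
        simp only [hj, hk]
        have e0 : j + 1 + 1 = j + 2 := by omega
        have e1 : j + k + 3 - 1 - (j + 1) = k + 1 := by omega
        have e2 : j + k + 3 - 1 - (j + 2) = k := by omega
        have e3 : j + 1 - 1 = j := by omega
        have e4 : j + k + 3 - 1 - j = k + 2 := by omega
        rw [e0, e1, e2, e3, e4]
        simp only [beta]
        rcases hb with rfl | rfl <;> simp [pow_succ] <;> ring
  have := cancel_inv_mulVec n b c d hQ u
  rw [hzero, Matrix.mulVec_zero] at this
  have hlast : u ⟨n - 1, by omega⟩ = 0 := by rw [← this]; rfl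
  simp only [hu] at hlast
  have e : n - 1 - (n - 1) = 0 := by omega
  rw [e] at hlast
  simp only [beta, mul_one] at hlast
  rcases hb with rfl | rfl <;> simp at hlast

lemma div_trick (D E : ℝ) (hD : D ≠ 0) (hE : E ≠ 0) (X : ℝ) :
    (1 - X / D) / E = (D - X) / (E * D) := by
  field_simp

/-- Theorem, row sums, c ≠ 2, or c = 2 and b = −1: the i-th row
sum of Q⁻¹ equals [1 − (b − λ)(vᵢ + v_{n−i+1})] / (c − 2b) (1-based indices). -/
theorem rowSum_general (n : ℕ) (hn : 2 ≤ n) (b c d : ℝ) (hb : b = 1 ∨ b = -1)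
    (hc0 : 0 ≤ c) (hlam : c - d ≠ 0) (hcase : c ≠ 2 ∨ (c = 2 ∧ b = -1))
    (hQ : IsUnit (triQ n b c d)) :
    let D : ℝ := d * beta c d (n - 1) - beta c d (n - 2)
    let v : ℕ → ℝ := fun i => b ^ (i - 1) * beta c d (n - i) / D
    ∀ i : Fin n, (∑ j, (triQ n b c d)⁻¹ i j) =
      (1 - (b - (c - d)) * (v ((i : ℕ) + 1) + v (n - ((i : ℕ) + 1) + 1))) /
        (c - 2 * b) := by
  intro D v i
  have hDm0 : D = d * beta c d (n - 1) - beta c d (n - 2) := rfl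
  have hD : D ≠ 0 := hDm0 ▸ D_ne_zero n hn b c d hb hQ
  clear_value D
  have hcb : c - 2 * b ≠ 0 := by
    rcases hb with rfl | rfl
    · rcases hcase with h | ⟨h1, h2⟩
      · intro hh; exact h (by linarith)
      · norm_num at h2
    · intro hh; linarith
  set w : Fin n → ℝ := fun i =>
    (1 - (b - (c - d)) * (b ^ (i:ℕ) * beta c d (n - 1 - (i:ℕ))
      + b ^ (n - 1 - (i:ℕ)) * beta c d (i:ℕ)) / D) / (c - 2 * b) with hw
  have key : (triQ n b c d).mulVec w = fun _ => 1 := by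
    funext i
    rw [tri_mulVec]
    simp only [hw]
    by_cases h0 : (i:ℕ) = 0
    · obtain ⟨m, hm⟩ : ∃ m, n = m + 2 := ⟨n - 2, by omega⟩
      have hDm : D = d * beta c d (m + 1) - beta c d m := by
        rw [hDm0]
        have f1 : n - 1 = m + 1 := by omega
        have f2 : n - 2 = m := by omega
        rw [f1, f2]
      rw [dif_pos (show (i:ℕ) + 1 < n by omega), dif_neg (by omega),
        if_pos (Or.inl h0)]
      simp only [h0, hm]
      have e1 : m + 2 - 1 - 0 = m + 1 := by omega
      have e2 : m + 2 - 1 - (0 + 1) = m := by omega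
      rw [e1, e2]
      simp only [Nat.zero_add, beta, pow_zero, pow_one]
      have hbm : beta c d m = d * beta c d (m + 1) - D := by rw [hDm]; ring
      rw [hbm]
      simp only [div_trick D (c - 2*b) hD hcb]
      rw [mul_div_assoc', mul_div_assoc', sub_zero, div_sub_div_same,
        div_eq_iff (mul_ne_zero hcb hD)]
      rcases hb with rfl | rfl <;> · simp only [pow_succ]; ring
    · by_cases h1 : (i:ℕ) = n - 1
      · obtain ⟨m, hm⟩ : ∃ m, n = m + 2 := ⟨n - 2, by omega⟩
        have h1' : (i:ℕ) = m + 1 := by omega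
        have hDm : D = d * beta c d (m + 1) - beta c d m := by
          rw [hDm0]
          have f1 : n - 1 = m + 1 := by omega
          have f2 : n - 2 = m := by omega
          rw [f1, f2]
        rw [dif_neg (show ¬ ((i:ℕ) + 1 < n) by omega),
          dif_pos (show 0 < (i:ℕ) by omega), if_pos (Or.inr h1)]
        simp only [h1', hm]
        have e1 : m + 2 - 1 - (m + 1) = 0 := by omega
        have e2 : m + 1 - 1 = m := by omega
        have e3 : m + 2 - 1 - m = 1 := by omega
        rw [e1, e2, e3]
        simp only [beta, pow_zero, pow_one]
        have hbm : beta c d m = d * beta c d (m + 1) - D := by rw [hDm]; ring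
        rw [hbm]
        simp only [div_trick D (c - 2*b) hD hcb]
        rw [mul_div_assoc', mul_div_assoc', sub_zero, div_sub_div_same,
          div_eq_iff (mul_ne_zero hcb hD)]
        rcases hb with rfl | rfl <;> · simp only [pow_succ]; ring
      · have hi := i.isLt
        obtain ⟨j, hj⟩ : ∃ j, (i:ℕ) = j + 1 := ⟨(i:ℕ) - 1, by omega⟩
        obtain ⟨k, hk⟩ : ∃ k, n = j + k + 3 := ⟨n - j - 3, by omega⟩
        rw [dif_pos (show (i:ℕ) + 1 < n by omega),
          dif_pos (show 0 < (i:ℕ) by omega), if_neg (by omega)]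
        simp only [hj, hk]
        have e0 : j + 1 + 1 = j + 2 := by omega
        have e1 : j + k + 3 - 1 - (j + 1) = k + 1 := by omega
        have e2 : j + k + 3 - 1 - (j + 2) = k := by omega
        have e3 : j + 1 - 1 = j := by omega
        have e4 : j + k + 3 - 1 - j = k + 2 := by omega
        rw [e0, e1, e2, e3, e4]
        simp only [beta]
        simp only [div_trick D (c - 2*b) hD hcb]
        rw [mul_div_assoc', mul_div_assoc', mul_div_assoc', div_sub_div_same,
          div_sub_div_same, div_eq_iff (mul_ne_zero hcb hD)]
        rcases hb with rfl | rfl <;> · simp only [pow_succ]; ring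
  have hsum : (∑ j, (triQ n b c d)⁻¹ i j) = w i := by
    have h1 : (∑ j, (triQ n b c d)⁻¹ i j)
        = (triQ n b c d)⁻¹.mulVec (fun _ => 1) i := by
      simp [Matrix.mulVec, dotProduct]
    rw [h1, ← key, cancel_inv_mulVec n b c d hQ]
  rw [hsum, hw]
  have hiv := i.isLt
  have e1 : (i:ℕ) + 1 - 1 = (i:ℕ) := by omega
  have e2 : n - ((i:ℕ) + 1) = n - 1 - (i:ℕ) := by omega
  have e3 : n - 1 - (i:ℕ) + 1 - 1 = n - 1 - (i:ℕ) := by omega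
  have e4 : n - (n - 1 - (i:ℕ) + 1) = (i:ℕ) := by omega
  simp only [v, e1, e2, e3, e4]
  rw [← add_div, mul_div_assoc]
end
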